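/- With a continuous dose, the two-way fixed-effects coefficient decomposes as β^twfe = ∫_{d_L}^{d_U} w₁(l)·m′(l) dl + w₀·(m(d_L) − m(0))/d_L, where w₁(l) := (E[D | D ≥ l] − E[D])·P(D ≥ l)/Var(D) and w₀ := (E[D | D > 0] − E[D])·P(D > 0)·d_L/Var(D); moreover w₁(l) ≥ 0 for every l ∈ [d_L, d_U], w₀ > 0, and ∫_{d_L}^{d_U} w₁(l) dl + w₀ = 1. -/

import Mathlib

open MeasureTheory

/-- Conditional expectation of `X` given the event `A`: `E[X | A] = E[X·1_A] / P(A)`. -/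
noncomputable def cExp {Ω : Type*} [MeasurableSpace Ω] (P : Measure Ω)
    (X : Ω → ℝ) (A : Set Ω) : ℝ :=
  (∫ ω in A, X ω ∂P) / (P A).toReal

/-- Mean of a real random variable. -/
noncomputable def meanR {Ω : Type*} [MeasurableSpace Ω] (P : Measure Ω) (X : Ω → ℝ) : ℝ :=
  ∫ ω, X ω ∂P

/-- Variance: `Var(X) = E[X²] − (E[X])²`. -/
noncomputable def varR {Ω : Type*} [MeasurableSpace Ω] (P : Measure Ω) (X : Ω → ℝ) : ℝ :=
  meanR P (fun ω => X ω ^ 2) - (meanR P X) ^ 2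

/-- Population two-way fixed-effects coefficient from regressing the outcome change `ΔY`
on the dose `D`: `β^twfe = E[(D − E[D])·ΔY] / Var(D)`. -/
noncomputable def betaTWFE {Ω : Type*} [MeasurableSpace Ω] (P : Measure Ω)
    (D ΔY : Ω → ℝ) : ℝ :=
  (∫ ω, (D ω - meanR P D) * ΔY ω ∂P) / varR P D

/-- Continuous-dose TWFE weight on dose `l`:
`w₁(l) = (E[D | D ≥ l] − E[D])·P(D ≥ l) / Var(D)`. -/
noncomputable def w1 {Ω : Type*} [MeasurableSpace Ω] (P : Measure Ω)
    (D : Ω → ℝ) (l : ℝ) : ℝ :=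
  (cExp P D {ω | l ≤ D ω} - meanR P D) * (P {ω | l ≤ D ω}).toReal / varR P D

/-- Weight on the untreated-to-lowest-dose comparison:
`w₀ = (E[D | D > 0] − E[D])·P(D > 0)·d_L / Var(D)`. -/
noncomputable def w0 {Ω : Type*} [MeasurableSpace Ω] (P : Measure Ω)
    (D : Ω → ℝ) (dL : ℝ) : ℝ :=
  (cExp P D {ω | 0 < D ω} - meanR P D) * (P {ω | 0 < D ω}).toReal * dL / varR P D

/-- With a continuous dose whose law is `p₀·δ₀ + f_D·Lebesgue` with `f_D`
positive on `[d_L, d_U]` and zero outside, and `m` a continuously differentiable version of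
`E[ΔY | D = ·]` on `[d_L, d_U]`, the TWFE coefficient decomposes as
`β^twfe = ∫_{d_L}^{d_U} w₁(l)·m′(l) dl + w₀·(m(d_L) − m(0))/d_L`;
moreover `w₁(l) ≥ 0` on `[d_L, d_U]`, `w₀ > 0`, and `∫_{d_L}^{d_U} w₁(l) dl + w₀ = 1`. -/
theorem twfe_decomposition_continuous
    {Ω : Type*} [MeasurableSpace Ω] (P : Measure Ω) [IsProbabilityMeasure P]
    (dL dU : ℝ) (hdL : 0 < dL) (hdLU : dL < dU)
    (D : Ω → ℝ) (hD : Measurable D)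
    (p0 : ℝ) (hp0 : 0 < p0) (hp01 : p0 < 1)
    (hp0def : P {ω | D ω = 0} = ENNReal.ofReal p0)
    (f : ℝ → ℝ) (hfm : Measurable f)
    (hfpos : ∀ x ∈ Set.Icc dL dU, 0 < f x)
    (hfzero : ∀ x ∉ Set.Icc dL dU, f x = 0)
    (hlaw : Measure.map D P =
      ENNReal.ofReal p0 • Measure.dirac (0 : ℝ) +
        (volume : Measure ℝ).withDensity (fun x => ENNReal.ofReal (f x)))
    (ΔY : Ω → ℝ) (hΔYm : Measurable ΔY) (hΔYi : Integrable ΔY P)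
    (m : ℝ → ℝ) (hm : ContDiffOn ℝ 1 m (Set.Icc dL dU))
    (hmver : ∀ g : ℝ → ℝ, Measurable g → (∃ C, ∀ x, |g x| ≤ C) →
      ∫ ω, ΔY ω * g (D ω) ∂P = ∫ ω, m (D ω) * g (D ω) ∂P) :
    betaTWFE P D ΔY =
      (∫ l in dL..dU, w1 P D l * derivWithin m (Set.Icc dL dU) l) +
        w0 P D dL * ((m dL - m 0) / dL) ∧
    (∀ l ∈ Set.Icc dL dU, 0 ≤ w1 P D l) ∧
    0 < w0 P D dL ∧
    (∫ l in dL..dU, w1 P D l) + w0 P D dL = 1 := by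
  classical
  have hdU : (0:ℝ) < dU := hdL.trans hdLU
  set ED := meanR P D with hEDdef
  -- support of the dose distribution
  have hSmeas : MeasurableSet ({0} ∪ Set.Icc dL dU : Set ℝ) :=
    (measurableSet_singleton 0).union measurableSet_Icc
  have hsupp : ∀ᵐ ω ∂P, D ω = 0 ∨ D ω ∈ Set.Icc dL dU := by
    have h1 : P (D ⁻¹' ({0} ∪ Set.Icc dL dU)ᶜ) = 0 := by
      rw [← Measure.map_apply hD hSmeas.compl, hlaw]
      have hd : (Measure.dirac (0:ℝ)) (({0} ∪ Set.Icc dL dU)ᶜ) = 0 := by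
        rw [Measure.dirac_apply' _ hSmeas.compl]
        simp [Set.indicator_apply]
      have hw : ((volume : Measure ℝ).withDensity fun x => ENNReal.ofReal (f x))
          (({0} ∪ Set.Icc dL dU)ᶜ) = 0 := by
        rw [withDensity_apply _ hSmeas.compl]
        have hz : ∫⁻ x in ({0} ∪ Set.Icc dL dU)ᶜ, ENNReal.ofReal (f x) ∂volume
            = ∫⁻ x in ({0} ∪ Set.Icc dL dU)ᶜ, 0 ∂volume :=
          setLIntegral_congr_fun hSmeas.compl (fun x hx => by
            rw [hfzero x (fun h => hx (Or.inr h)), ENNReal.ofReal_zero])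
        rw [hz, lintegral_zero]
      rw [Measure.add_apply, Measure.smul_apply, hd, hw, smul_zero, add_zero]
    rw [ae_iff]
    refine measure_mono_null (fun ω h => h) h1
  have hDabs : ∀ᵐ ω ∂P, |D ω| ≤ dU := by
    refine hsupp.mono ?_
    rintro ω (h0 | hx)
    · rw [h0]; simpa using hdU.le
    · rw [abs_of_nonneg (hdL.le.trans hx.1)]; exact hx.2
  have hsubabs : ∀ {x : ℝ}, |x| ≤ dU → |x - ED| ≤ dU + |ED| := by
    intro x h
    rw [abs_le] at h ⊢
    constructor <;> linarith [le_abs_self ED, neg_abs_le ED]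
  -- integrability helper
  have hbdd : ∀ (g : Ω → ℝ), AEStronglyMeasurable g P →
      (∃ C, ∀ᵐ ω ∂P, |g ω| ≤ C) → Integrable g P := by
    rintro g hg ⟨C, hC⟩
    exact Integrable.mono' (integrable_const C) hg
      (hC.mono fun ω h => by simpa [Real.norm_eq_abs] using h)
  have hDi : Integrable D P :=
    hbdd D hD.aestronglyMeasurable ⟨dU, hDabs⟩
  have hD2i : Integrable (fun ω => D ω ^ 2) P := by
    refine hbdd _ (hD.pow_const 2).aestronglyMeasurable ⟨dU ^ 2, hDabs.mono fun ω h => ?_⟩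
    rw [abs_pow]
    exact pow_le_pow_left₀ (abs_nonneg _) h 2
  have hDsub : Integrable (fun ω => D ω - ED) P := hDi.sub (integrable_const ED)
  have hEDint : ∫ ω, D ω ∂P = ED := by rw [hEDdef]; rfl
  have hzero : ∫ ω, (D ω - ED) ∂P = 0 := by
    rw [integral_sub hDi (integrable_const _), integral_const]
    simp [hEDint]
  have hAdL : MeasurableSet {ω | dL ≤ D ω} := measurableSet_le measurable_const hD
  have hA0 : MeasurableSet {ω | D ω = 0} := hD (measurableSet_singleton 0)
  -- a.e. set identities
  have hAeq : ({ω | 0 < D ω} : Set Ω) =ᵐ[P] {ω | dL ≤ D ω} := by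
    refine Filter.eventuallyEq_set.2 (hsupp.mono ?_)
    rintro ω (h0 | hx)
    · simp only [Set.mem_setOf_eq, h0]
      constructor <;> intro h <;> linarith
    · exact iff_of_true (hdL.trans_le hx.1) hx.1
  have hA0c : ({ω | D ω = 0}ᶜ : Set Ω) =ᵐ[P] {ω | dL ≤ D ω} := by
    refine Filter.eventuallyEq_set.2 (hsupp.mono ?_)
    rintro ω (h0 | hx)
    · have hL : ω ∉ ({ω | D ω = 0}ᶜ : Set Ω) := fun hn => hn h0
      have hR : ω ∉ {ω | dL ≤ D ω} := by
        intro hmem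
        have hmem' : dL ≤ D ω := hmem
        rw [h0] at hmem'
        linarith
      exact iff_of_false hL hR
    · have hL : ω ∈ ({ω | D ω = 0}ᶜ : Set Ω) := fun hn => absurd hn (ne_of_gt (hdL.trans_le hx.1))
      exact iff_of_true hL hx.1
  -- key conditional-expectation identity
  have cExp_key : ∀ A : Set Ω,
      (cExp P D A - ED) * (P A).toReal = ∫ ω in A, (D ω - ED) ∂P := by
    intro A
    have hsub : ∫ ω in A, (D ω - ED) ∂P
        = (∫ ω in A, D ω ∂P) - ED * (P A).toReal := by
      rw [integral_sub hDi.integrableOn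
        (integrable_const _).integrableOn, setIntegral_const, measureReal_def,
        smul_eq_mul]
      ring
    rcases eq_or_ne (P A) 0 with h0 | h0
    · have hr : P.restrict A = 0 := Measure.restrict_eq_zero.2 h0
      rw [hsub, hr, h0]
      simp
    · have ht : (P A).toReal ≠ 0 :=
        ENNReal.toReal_ne_zero.2 ⟨h0, measure_ne_top P A⟩
      rw [hsub, cExp, sub_mul, div_mul_cancel₀ _ ht]
  have w1_eq : ∀ l, w1 P D l
      = (∫ ω in {ω | l ≤ D ω}, (D ω - ED) ∂P) / varR P D := by
    intro l
    show (cExp P D {ω | l ≤ D ω} - meanR P D) * (P {ω | l ≤ D ω}).toReal / varR P D = _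
    rw [← hEDdef, cExp_key]
  have hw0eq : w0 P D dL
      = (∫ ω in {ω | dL ≤ D ω}, (D ω - ED) ∂P) * dL / varR P D := by
    show (cExp P D {ω | 0 < D ω} - meanR P D) * (P {ω | 0 < D ω}).toReal * dL / varR P D = _
    rw [← hEDdef, cExp_key, setIntegral_congr_set hAeq]
  -- E[D] > 0
  have hEDpos : 0 < ED := by
    have hPA : P {ω | dL ≤ D ω} = 1 - ENNReal.ofReal p0 := by
      rw [← measure_congr hA0c, measure_compl hA0 (measure_ne_top P _), measure_univ, hp0def]
    have hPAtr : (P {ω | dL ≤ D ω}).toReal = 1 - p0 := by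
      rw [hPA, ENNReal.toReal_sub_of_le _ ENNReal.one_ne_top]
      · simp [ENNReal.toReal_ofReal hp0.le]
      · exact ENNReal.ofReal_le_one.2 hp01.le
    have hmono : ∫ ω, Set.indicator {ω | dL ≤ D ω} (fun _ => dL) ω ∂P ≤ ∫ ω, D ω ∂P := by
      refine integral_mono_ae ((integrable_const dL).indicator hAdL) hDi ?_
      refine hsupp.mono ?_
      rintro ω (h0 | hx)
      · rw [Set.indicator_apply]
        split_ifs with h
        · exfalso; rw [Set.mem_setOf_eq, h0] at h; linarith
        · rw [h0]
      · rw [Set.indicator_apply, if_pos (show ω ∈ {ω | dL ≤ D ω} from hx.1)]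
        exact hx.1
    rw [integral_indicator hAdL, setIntegral_const, measureReal_def, smul_eq_mul, hPAtr, hEDint] at hmono
    have : 0 < (1 - p0) * dL := mul_pos (by linarith) hdL
    linarith
  -- variance is positive
  have hvarR : varR P D = (∫ ω, D ω ^ 2 ∂P) - ED ^ 2 := by
    have h : varR P D = meanR P (fun ω => D ω ^ 2) - (meanR P D) ^ 2 := rfl
    rw [h, ← hEDdef]
    rfl
  have hVar2 : varR P D = ∫ ω, (D ω - ED) ^ 2 ∂P := by
    have hexp : ∀ ω, (D ω - ED) ^ 2 = D ω ^ 2 - 2 * ED * D ω + ED ^ 2 := fun ω => by ring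
    have hsub2 : Integrable (fun ω => D ω ^ 2 - 2 * ED * D ω) P :=
      hD2i.sub (hDi.const_mul (2 * ED))
    rw [integral_congr_ae (Filter.Eventually.of_forall hexp),
      integral_add hsub2 (integrable_const _),
      integral_sub hD2i (hDi.const_mul (2 * ED)), integral_const,
      integral_const_mul, hEDint, hvarR]
    simp only [probReal_univ, one_smul]
    ring
  have hVarpos : 0 < varR P D := by
    have hsq : Integrable (fun ω => (D ω - ED) ^ 2) P := by
      refine hbdd _ (((hD.sub measurable_const).pow_const 2)).aestronglyMeasurable
        ⟨(dU + |ED|) ^ 2, hDabs.mono fun ω h => ?_⟩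
      rw [abs_pow]
      exact pow_le_pow_left₀ (abs_nonneg _) (hsubabs h) 2
    have h1 : ∫ ω in {ω | D ω = 0}, (D ω - ED) ^ 2 ∂P = ED ^ 2 * p0 := by
      rw [setIntegral_congr_fun hA0 (fun ω (h : D ω = 0) => by
        show (D ω - ED) ^ 2 = ED ^ 2
        rw [h]; ring), setIntegral_const, measureReal_def, hp0def, ENNReal.toReal_ofReal hp0.le, smul_eq_mul]
      ring
    have h2 : ∫ ω in {ω | D ω = 0}, (D ω - ED) ^ 2 ∂P ≤ ∫ ω, (D ω - ED) ^ 2 ∂P :=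
      setIntegral_le_integral hsq (Filter.Eventually.of_forall fun ω => sq_nonneg _)
    have h3 : 0 < ED ^ 2 * p0 := mul_pos (pow_pos hEDpos 2) hp0
    rw [hVar2]
    linarith
  have hVarne : varR P D ≠ 0 := ne_of_gt hVarpos
  -- H l ≥ 0 for every l
  have hHnonneg : ∀ l : ℝ, 0 ≤ ∫ ω in {ω | l ≤ D ω}, (D ω - ED) ∂P := by
    intro l
    have hAm : MeasurableSet {ω | l ≤ D ω} := measurableSet_le measurable_const hD
    have hp1 : (P {ω | l ≤ D ω}).toReal ≤ 1 := by
      calc (P {ω | l ≤ D ω}).toReal ≤ (P Set.univ).toReal :=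
            ENNReal.toReal_mono (measure_ne_top P _) (measure_mono (Set.subset_univ _))
        _ = 1 := by simp
    have hp0' : 0 ≤ (P {ω | l ≤ D ω}).toReal := ENNReal.toReal_nonneg
    have ha : l * (P {ω | l ≤ D ω}).toReal ≤ ∫ ω in {ω | l ≤ D ω}, D ω ∂P := by
      have hmono := setIntegral_mono_on (f := fun _ => l)
        (integrable_const _).integrableOn hDi.integrableOn hAm
        (fun x hx => hx)
      rw [setIntegral_const, measureReal_def, smul_eq_mul] at hmono
      linarith
    have hb : ∫ ω in {ω | l ≤ D ω}ᶜ, D ω ∂P ≤ l * (1 - (P {ω | l ≤ D ω}).toReal) := by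
      have hmono := setIntegral_mono_on (g := fun _ => l)
        hDi.integrableOn (integrable_const _).integrableOn hAm.compl
        (fun x hx => le_of_lt (not_le.1 hx))
      rw [setIntegral_const, measureReal_def, smul_eq_mul] at hmono
      have hpc : (P {ω | l ≤ D ω}ᶜ).toReal = 1 - (P {ω | l ≤ D ω}).toReal := by
        rw [measure_compl hAm (measure_ne_top P _),
          ENNReal.toReal_sub_of_le (measure_mono (Set.subset_univ _)) (measure_ne_top P _),
          measure_univ, ENNReal.toReal_one]
      rw [hpc] at hmono
      linarith
    have hsum' : (∫ ω in {ω | l ≤ D ω}, D ω ∂P) + ∫ ω in {ω | l ≤ D ω}ᶜ, D ω ∂P = ED := by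
      rw [integral_add_compl hAm hDi, hEDint]
    have hH : ∫ ω in {ω | l ≤ D ω}, (D ω - ED) ∂P
        = (∫ ω in {ω | l ≤ D ω}, D ω ∂P) - ED * (P {ω | l ≤ D ω}).toReal := by
      rw [integral_sub hDi.integrableOn
        (integrable_const _).integrableOn, setIntegral_const, measureReal_def, smul_eq_mul]
      ring
    rw [hH]
    nlinarith [ha, hb, hsum', hp0', hp1]
  -- value of H dL
  have hHdL : ∫ ω in {ω | dL ≤ D ω}, (D ω - ED) ∂P = ED * p0 := by
    have hsplit := integral_add_compl hA0 hDsub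
    rw [hzero] at hsplit
    have h1 : ∫ ω in {ω | D ω = 0}, (D ω - ED) ∂P = -(ED * p0) := by
      rw [setIntegral_congr_fun hA0 (fun ω (h : D ω = 0) => by
        show D ω - ED = -ED
        rw [h]; ring), setIntegral_const, measureReal_def, hp0def, ENNReal.toReal_ofReal hp0.le, smul_eq_mul]
      ring
    have h3 : ∫ ω in {ω | dL ≤ D ω}, (D ω - ED) ∂P
        = ∫ ω in {ω | D ω = 0}ᶜ, (D ω - ED) ∂P := (setIntegral_congr_set hA0c).symm
    rw [h3]
    linarith
  -- clamp onto [dL, dU] and the derivative function φ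
  have hmderivcont : ContinuousOn (derivWithin m (Set.Icc dL dU)) (Set.Icc dL dU) :=
    hm.continuousOn_derivWithin (uniqueDiffOn_Icc hdLU) le_rfl
  set c : ℝ → ℝ := fun x => max dL (min x dU) with hcdef
  have hccont : Continuous c := continuous_const.max (continuous_id.min continuous_const)
  have hcmem : ∀ x, c x ∈ Set.Icc dL dU :=
    fun x => ⟨le_max_left _ _, max_le hdLU.le (min_le_right _ _)⟩
  have hcid : ∀ x ∈ Set.Icc dL dU, c x = x := by
    intro x hx
    show max dL (min x dU) = x
    rw [min_eq_left hx.2, max_eq_right hx.1]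
  set φ : ℝ → ℝ := fun l => derivWithin m (Set.Icc dL dU) (c l) with hφdef
  have hφcont : Continuous φ := hmderivcont.comp_continuous hccont hcmem
  have hφicc : ∀ l ∈ Set.Icc dL dU, φ l = derivWithin m (Set.Icc dL dU) l := by
    intro l hl
    show derivWithin m (Set.Icc dL dU) (c l) = _
    rw [hcid l hl]
  have hφbd : ∃ C, ∀ x, |φ x| ≤ C := by
    obtain ⟨C, hC⟩ := isCompact_Icc.exists_bound_of_continuousOn hmderivcont
    exact ⟨C, fun x => by simpa [Real.norm_eq_abs] using hC (c x) (hcmem x)⟩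
  -- fundamental theorem of calculus
  have ftc : ∀ x ∈ Set.Icc dL dU, ∫ l in Set.Ioc dL x, φ l = m x - m dL := by
    intro x hx
    rw [← intervalIntegral.integral_of_le hx.1]
    refine intervalIntegral.integral_eq_sub_of_hasDeriv_right_of_le hx.1
      (hm.continuousOn.mono (Set.Icc_subset_Icc le_rfl hx.2)) (fun t ht => ?_)
      (hφcont.intervalIntegrable _ _)
    have htI : t ∈ Set.Icc dL dU := ⟨ht.1.le, (ht.2.trans_le hx.2).le⟩
    have hder : HasDerivAt m (derivWithin m (Set.Icc dL dU) t) t := by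
      have hd1 : DifferentiableWithinAt ℝ m (Set.Icc dL dU) t :=
        (hm.differentiableOn one_ne_zero) t htI
      exact hd1.hasDerivWithinAt.hasDerivAt
        (Icc_mem_nhds ht.1 (ht.2.trans_le hx.2))
    have hφt : φ t = derivWithin m (Set.Icc dL dU) t := hφicc t htI
    rw [hφt]
    exact hder.hasDerivWithinAt
  -- Fubini step
  haveI hfinS : IsFiniteMeasure (volume.restrict (Set.Ioc dL dU)) :=
    ⟨by rw [Measure.restrict_apply_univ]; exact measure_Ioc_lt_top⟩
  have fub : ∀ ψ : ℝ → ℝ, Continuous ψ → (∃ C, ∀ x, |ψ x| ≤ C) →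
      Integrable (fun ω => (D ω - ED) * ∫ l in Set.Ioc dL dU ∩ Set.Iic (D ω), ψ l) P ∧
      ∫ ω, (D ω - ED) * (∫ l in Set.Ioc dL dU ∩ Set.Iic (D ω), ψ l) ∂P
        = ∫ l in Set.Ioc dL dU, (∫ ω in {ω | l ≤ D ω}, (D ω - ED) ∂P) * ψ l := by
    rintro ψ hψc ⟨Cψ, hCψ⟩
    have hCψ0 : 0 ≤ Cψ := le_trans (abs_nonneg _) (hCψ 0)
    set F : Ω × ℝ → ℝ := fun q =>
      Set.indicator {q : Ω × ℝ | q.2 ≤ D q.1} (fun q => (D q.1 - ED) * ψ q.2) q with hFdef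
    have hFmeas : Measurable F :=
      Measurable.indicator
        (((hD.comp measurable_fst).sub measurable_const).mul
          (hψc.measurable.comp measurable_snd))
        (measurableSet_le measurable_snd (hD.comp measurable_fst))
    have hFbd : ∀ᵐ q ∂(P.prod (volume.restrict (Set.Ioc dL dU))),
        ‖F q‖ ≤ (dU + |ED|) * Cψ := by
      have hMmeas : MeasurableSet {ω : Ω | |D ω| ≤ dU} :=
        measurableSet_le hD.abs measurable_const
      have hzero' : (P.prod (volume.restrict (Set.Ioc dL dU)))
          ({ω : Ω | |D ω| ≤ dU}ᶜ ×ˢ (Set.univ : Set ℝ)) = 0 := by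
        rw [Measure.prod_prod]
        have hP0 : P {ω : Ω | |D ω| ≤ dU}ᶜ = 0 := by
          rw [Set.compl_setOf]
          exact ae_iff.1 hDabs
        rw [hP0, zero_mul]
      have hae : ∀ᵐ q ∂(P.prod (volume.restrict (Set.Ioc dL dU))), |D q.1| ≤ dU := by
        rw [ae_iff]
        refine measure_mono_null ?_ hzero'
        intro q hq
        exact ⟨hq, Set.mem_univ _⟩
      refine hae.mono fun q hq => ?_
      rw [Real.norm_eq_abs]
      have h1 : |F q| ≤ |(D q.1 - ED) * ψ q.2| := by
        by_cases h : q ∈ {q : Ω × ℝ | q.2 ≤ D q.1}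
        · simp only [hFdef, Set.indicator_of_mem h]
          exact le_refl _
        · simp only [hFdef, Set.indicator_of_notMem h, abs_zero]
          exact abs_nonneg _
      calc |F q| ≤ |(D q.1 - ED) * ψ q.2| := h1
        _ = |D q.1 - ED| * |ψ q.2| := abs_mul _ _
        _ ≤ (dU + |ED|) * Cψ :=
          mul_le_mul (hsubabs hq) (hCψ _) (abs_nonneg _)
            (by positivity)
    have hFi : Integrable F (P.prod (volume.restrict (Set.Ioc dL dU))) :=
      Integrable.mono' (integrable_const _) hFmeas.aestronglyMeasurable hFbd
    have hinner : ∀ ω, (∫ l in Set.Ioc dL dU, F (ω, l))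
        = (D ω - ED) * ∫ l in Set.Ioc dL dU ∩ Set.Iic (D ω), ψ l := by
      intro ω
      have he : ∫ l in Set.Ioc dL dU, F (ω, l)
          = ∫ l in Set.Ioc dL dU,
              Set.indicator (Set.Iic (D ω)) (fun l => (D ω - ED) * ψ l) l := by
        refine integral_congr_ae (Filter.Eventually.of_forall fun l => ?_)
        simp only [hFdef]
        by_cases h : l ≤ D ω
        · rw [Set.indicator_of_mem (show (ω, l) ∈ {q : Ω × ℝ | q.2 ≤ D q.1} from h),
            Set.indicator_of_mem (Set.mem_Iic.2 h)]
        · rw [Set.indicator_of_notMem (show (ω, l) ∉ {q : Ω × ℝ | q.2 ≤ D q.1} from h),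
            Set.indicator_of_notMem (fun hh => h (Set.mem_Iic.1 hh))]
      rw [he, setIntegral_indicator measurableSet_Iic, integral_const_mul]
    have houter : ∀ l, (∫ ω, F (ω, l) ∂P)
        = (∫ ω in {ω | l ≤ D ω}, (D ω - ED) ∂P) * ψ l := by
      intro l
      have he : ∫ ω, F (ω, l) ∂P
          = ∫ ω, Set.indicator {ω | l ≤ D ω} (fun ω => (D ω - ED) * ψ l) ω ∂P := by
        refine integral_congr_ae (Filter.Eventually.of_forall fun ω => ?_)
        simp only [hFdef]
        by_cases h : l ≤ D ω
        · rw [Set.indicator_of_mem (show (ω, l) ∈ {q : Ω × ℝ | q.2 ≤ D q.1} from h),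
            Set.indicator_of_mem (show ω ∈ {ω | l ≤ D ω} from h)]
        · rw [Set.indicator_of_notMem (show (ω, l) ∉ {q : Ω × ℝ | q.2 ≤ D q.1} from h),
            Set.indicator_of_notMem (show ω ∉ {ω | l ≤ D ω} from h)]
      rw [he, integral_indicator (measurableSet_le measurable_const hD), integral_mul_const]
    have hswap : ∫ ω, (∫ l in Set.Ioc dL dU, F (ω, l)) ∂P
        = ∫ l in Set.Ioc dL dU, (∫ ω, F (ω, l) ∂P) := by
      exact integral_integral_swap (f := fun ω l => F (ω, l)) hFi
    constructor
    · exact hFi.integral_prod_left.congr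
        (Filter.Eventually.of_forall fun ω => hinner ω)
    · calc ∫ ω, (D ω - ED) * (∫ l in Set.Ioc dL dU ∩ Set.Iic (D ω), ψ l) ∂P
          = ∫ ω, (∫ l in Set.Ioc dL dU, F (ω, l)) ∂P :=
            integral_congr_ae (Filter.Eventually.of_forall fun ω => (hinner ω).symm)
        _ = ∫ l in Set.Ioc dL dU, (∫ ω, F (ω, l) ∂P) := hswap
        _ = _ := integral_congr_ae (Filter.Eventually.of_forall fun l => houter l)
  -- measurable version of m
  set mt : ℝ → ℝ := fun x => if x = 0 then m 0 else m (c x) with hmtdef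
  have hmt0 : mt 0 = m 0 := by rw [hmtdef]; simp
  have hmticc : ∀ x ∈ Set.Icc dL dU, mt x = m x := by
    intro x hx
    have hxne : x ≠ 0 := ne_of_gt (hdL.trans_le hx.1)
    show (if x = 0 then m 0 else m (c x)) = m x
    rw [if_neg hxne, hcid x hx]
  have hmtmeas : Measurable mt := by
    refine Measurable.ite measurableSet_eq measurable_const ?_
    exact (hm.continuousOn.comp_continuous hccont hcmem).measurable
  obtain ⟨Mm, hMm⟩ := isCompact_Icc.exists_bound_of_continuousOn hm.continuousOn
  have hmtbd : ∀ x, |mt x| ≤ max |m 0| Mm := by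
    intro x
    show |if x = 0 then m 0 else m (c x)| ≤ max |m 0| Mm
    split_ifs with h
    · exact le_max_left _ _
    · exact le_trans (by simpa [Real.norm_eq_abs] using hMm (c x) (hcmem x)) (le_max_right _ _)
  -- clamp to [0, dU]
  have hclamp : ∀ x, (x = 0 ∨ x ∈ Set.Icc dL dU) → max 0 (min x dU) = x := by
    rintro x (rfl | hx)
    · rw [min_eq_left hdU.le, max_self]
    · rw [min_eq_left hx.2, max_eq_right (hdL.le.trans hx.1)]
  -- the key a.e. identity
  have hkey1 : ∀ᵐ ω ∂P, (D ω - ED) * (mt (D ω) - m 0) =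
      Set.indicator {ω | dL ≤ D ω} (fun ω => D ω - ED) ω * (m dL - m 0)
      + (D ω - ED) * (∫ l in Set.Ioc dL dU ∩ Set.Iic (D ω), φ l) := by
    refine hsupp.mono ?_
    rintro ω (h0 | hx)
    · have he : Set.Ioc dL dU ∩ Set.Iic (D ω) = ∅ := by
        rw [h0]
        refine Set.eq_empty_iff_forall_notMem.2 fun l hl => ?_
        have := hl.1.1
        have := hl.2
        simp only [Set.mem_Iic] at this
        linarith
      rw [he, Set.indicator_apply, if_neg (by rw [Set.mem_setOf_eq, h0]; exact not_le.2 hdL),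
        h0, hmt0]
      simp
    · have hcap : Set.Ioc dL dU ∩ Set.Iic (D ω) = Set.Ioc dL (D ω) := by
        rw [Set.Ioc_inter_Iic, min_eq_right hx.2]
      rw [hcap, ftc _ hx, Set.indicator_apply,
        if_pos (show ω ∈ {ω | dL ≤ D ω} from hx.1), hmticc _ hx]
      ring
  -- integrability of pieces
  have hindint : Integrable
      (fun ω => Set.indicator {ω | dL ≤ D ω} (fun ω => D ω - ED) ω * (m dL - m 0)) P :=
    (hDsub.indicator hAdL).mul_const _
  obtain ⟨hf2i, hf2eq⟩ := fub φ hφcont hφbd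
  have hImt : Integrable (fun ω => (D ω - ED) * (mt (D ω) - m 0)) P := by
    refine hbdd _ (((hD.sub measurable_const).mul
      ((hmtmeas.comp hD).sub measurable_const)).aestronglyMeasurable)
      ⟨(dU + |ED|) * (max |m 0| Mm + |m 0|), hDabs.mono fun ω h => ?_⟩
    rw [abs_mul]
    refine mul_le_mul (hsubabs h) ?_ (abs_nonneg _) (by positivity)
    calc |mt (D ω) - m 0| ≤ |mt (D ω)| + |m 0| := abs_sub _ _
      _ ≤ max |m 0| Mm + |m 0| := by linarith [hmtbd (D ω)]
  -- numerator computation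
  have hnum : ∫ ω, (D ω - ED) * ΔY ω ∂P
      = (∫ ω in {ω | dL ≤ D ω}, (D ω - ED) ∂P) * (m dL - m 0)
        + ∫ l in Set.Ioc dL dU, (∫ ω in {ω | l ≤ D ω}, (D ω - ED) ∂P) * φ l := by
    set g : ℝ → ℝ := fun x => max 0 (min x dU) - ED with hgdef
    have hgmeas : Measurable g :=
      (measurable_const.max (measurable_id.min measurable_const)).sub measurable_const
    have hgabs : ∀ x, |g x| ≤ dU + |ED| := by
      intro x
      show |max 0 (min x dU) - ED| ≤ dU + |ED|
      have h1 : 0 ≤ max 0 (min x dU) := le_max_left _ _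
      have h2 : max 0 (min x dU) ≤ dU := max_le hdU.le (min_le_right _ _)
      rw [abs_le]
      constructor <;> linarith [le_abs_self ED, neg_abs_le ED]
    have hstep1 : ∫ ω, (D ω - ED) * ΔY ω ∂P = ∫ ω, ΔY ω * g (D ω) ∂P := by
      refine integral_congr_ae (hsupp.mono ?_)
      intro ω h
      show (D ω - ED) * ΔY ω = ΔY ω * (max 0 (min (D ω) dU) - ED)
      rw [hclamp _ h]
      ring
    have hstep2 := hmver g hgmeas ⟨dU + |ED|, hgabs⟩
    have hstep3 : ∫ ω, m (D ω) * g (D ω) ∂P = ∫ ω, (D ω - ED) * mt (D ω) ∂P := by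
      refine integral_congr_ae (hsupp.mono ?_)
      intro ω h
      show m (D ω) * (max 0 (min (D ω) dU) - ED) = (D ω - ED) * mt (D ω)
      rw [hclamp _ h]
      rcases h with h0 | hx
      · rw [h0, hmt0]; ring
      · rw [hmticc _ hx]; ring
    have hsplit : ∫ ω, (D ω - ED) * mt (D ω) ∂P
        = (∫ ω, (D ω - ED) * (mt (D ω) - m 0) ∂P) + (∫ ω, (D ω - ED) ∂P) * m 0 := by
      have hpt : ∀ ω, (D ω - ED) * mt (D ω)
          = (D ω - ED) * (mt (D ω) - m 0) + (D ω - ED) * m 0 := fun ω => by ring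
      rw [integral_congr_ae (Filter.Eventually.of_forall hpt),
        integral_add hImt (hDsub.mul_const _), integral_mul_const]
    have hmain : ∫ ω, (D ω - ED) * (mt (D ω) - m 0) ∂P
        = (∫ ω in {ω | dL ≤ D ω}, (D ω - ED) ∂P) * (m dL - m 0)
          + ∫ l in Set.Ioc dL dU, (∫ ω in {ω | l ≤ D ω}, (D ω - ED) ∂P) * φ l := by
      rw [integral_congr_ae hkey1, integral_add hindint hf2i, hf2eq,
        integral_mul_const, integral_indicator hAdL]
    rw [hstep1, hstep2, hstep3, hsplit, hzero, hmain]
    ring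
  -- sum-to-one computation
  have hDD : Integrable (fun ω => (D ω - ED) * D ω) P := by
    refine hbdd _ ((hD.sub measurable_const).mul hD).aestronglyMeasurable
      ⟨(dU + |ED|) * dU, hDabs.mono fun ω h => ?_⟩
    rw [abs_mul]
    exact mul_le_mul (hsubabs h) h (abs_nonneg _) (by positivity)
  have hsum_ae : ∀ᵐ ω ∂P, (D ω - ED) * (∫ l in Set.Ioc dL dU ∩ Set.Iic (D ω), (1:ℝ))
      = (D ω - ED) * D ω
        - Set.indicator {ω | dL ≤ D ω} (fun ω => D ω - ED) ω * dL := by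
    refine hsupp.mono ?_
    rintro ω (h0 | hx)
    · have he : Set.Ioc dL dU ∩ Set.Iic (D ω) = ∅ := by
        rw [h0]
        refine Set.eq_empty_iff_forall_notMem.2 fun l hl => ?_
        have h1 := hl.1.1
        have h2 := Set.mem_Iic.1 hl.2
        linarith
      rw [he, Set.indicator_apply, if_neg (by rw [Set.mem_setOf_eq, h0]; exact not_le.2 hdL),
        h0]
      simp
    · have hcap : Set.Ioc dL dU ∩ Set.Iic (D ω) = Set.Ioc dL (D ω) := by
        rw [Set.Ioc_inter_Iic, min_eq_right hx.2]
      have hv : ∫ l in Set.Ioc dL (D ω), (1:ℝ) = D ω - dL := by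
        rw [setIntegral_const, measureReal_def, Real.volume_Ioc, smul_eq_mul, mul_one,
          ENNReal.toReal_ofReal (by linarith [hx.1])]
      rw [hcap, hv, Set.indicator_apply, if_pos (show ω ∈ {ω | dL ≤ D ω} from hx.1)]
      ring
  obtain ⟨hf1i, hf1eq⟩ := fub (fun _ => (1:ℝ)) continuous_const ⟨1, fun x => by norm_num⟩
  have hDDvar : ∫ ω, (D ω - ED) * D ω ∂P = varR P D := by
    have hpt : ∀ ω, (D ω - ED) * D ω = D ω ^ 2 - ED * D ω := fun ω => by ring
    rw [integral_congr_ae (Filter.Eventually.of_forall hpt),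
      integral_sub hD2i (hDi.const_mul ED), integral_const_mul, hEDint, hvarR]
    ring
  have hHint : ∫ l in Set.Ioc dL dU, (∫ ω in {ω | l ≤ D ω}, (D ω - ED) ∂P)
      = varR P D - (∫ ω in {ω | dL ≤ D ω}, (D ω - ED) ∂P) * dL := by
    have h1 : ∫ l in Set.Ioc dL dU, (∫ ω in {ω | l ≤ D ω}, (D ω - ED) ∂P) * (1:ℝ)
        = ∫ l in Set.Ioc dL dU, (∫ ω in {ω | l ≤ D ω}, (D ω - ED) ∂P) := by
      simp
    rw [← h1, ← hf1eq, integral_congr_ae hsum_ae,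
      integral_sub hDD ((hDsub.indicator hAdL).mul_const _),
      integral_mul_const, integral_indicator hAdL, hDDvar]
  -- conclude
  refine ⟨?_, ?_, ?_, ?_⟩
  · show (∫ ω, (D ω - meanR P D) * ΔY ω ∂P) / varR P D = _
    rw [← hEDdef, hnum, intervalIntegral.integral_of_le hdLU.le]
    have hw1S : ∫ l in Set.Ioc dL dU, w1 P D l * derivWithin m (Set.Icc dL dU) l
        = (∫ l in Set.Ioc dL dU, (∫ ω in {ω | l ≤ D ω}, (D ω - ED) ∂P) * φ l) / varR P D := by
      rw [← integral_div]
      refine setIntegral_congr_fun measurableSet_Ioc fun l hl => ?_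
      have hlI : l ∈ Set.Icc dL dU := ⟨hl.1.le, hl.2⟩
      show w1 P D l * derivWithin m (Set.Icc dL dU) l = _
      rw [w1_eq l, ← hφicc l hlI]
      ring
    have hw0v : w0 P D dL * ((m dL - m 0) / dL)
        = (∫ ω in {ω | dL ≤ D ω}, (D ω - ED) ∂P) * (m dL - m 0) / varR P D := by
      rw [hw0eq]
      field_simp
    rw [hw1S, hw0v, add_div]
    ring
  · intro l _
    rw [w1_eq l]
    exact div_nonneg (hHnonneg l) hVarpos.le
  · rw [hw0eq, hHdL]
    exact div_pos (mul_pos (mul_pos hEDpos hp0) hdL) hVarpos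
  · rw [intervalIntegral.integral_of_le hdLU.le]
    have hS : ∫ l in Set.Ioc dL dU, w1 P D l
        = (∫ l in Set.Ioc dL dU, (∫ ω in {ω | l ≤ D ω}, (D ω - ED) ∂P)) / varR P D := by
      rw [← integral_div]
      exact setIntegral_congr_fun measurableSet_Ioc fun l hl => w1_eq l
    rw [hS, hHint, hw0eq]
    field_simp
    ring
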